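/- Let 𝒞 = {0,1}^ω be the Cantor space and let 𝒞_ω = {(a_i)_{i∈ω} ∈ 𝒞 : a_i = 1 for infinitely many i}, with the subspace topology. The map φ : 𝒞_ω → S_c(ω+1) defined by φ((a_i)_{i∈ω}) = {i : a_i = 1} ∪ {ω} is a homeomorphism, where ω+1 carries its order topology (equivalently, it is the one-point compactification of the discrete space ω). -/
import Mathlib


open Set Topology

/-- The hyperspace of nonempty closed subsets of a topological space `X`. -/
structure CL (X : Type*) [TopologicalSpace X] : Type _ where
  carrier : Set X
  isClosed' : IsClosed carrier
  nonempty' : carrier.Nonempty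

/-- The basic Vietoris set `⟨𝒰⟩` determined by a finite family `𝒰` of subsets of `X`:
all nonempty closed sets contained in `⋃ 𝒰` and meeting every member of `𝒰`. -/
def CL.box {X : Type*} [TopologicalSpace X] (𝒰 : Finset (Set X)) : Set (CL X) :=
  {A | A.carrier ⊆ ⋃₀ (𝒰 : Set (Set X)) ∧ ∀ U ∈ 𝒰, (A.carrier ∩ U).Nonempty}

/-- The Vietoris topology on `CL X`, generated by the sets `⟨𝒰⟩` where `𝒰` ranges over
finite families of open subsets of `X`. -/
instance CL.instTopologicalSpace (X : Type*) [TopologicalSpace X] :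
    TopologicalSpace (CL X) :=
  TopologicalSpace.generateFrom
    {s | ∃ 𝒰 : Finset (Set X), (∀ U ∈ 𝒰, IsOpen U) ∧ s = CL.box 𝒰}

/-- `p` is the limit of the set `S`: `p ∈ S` and `S \ U` is finite for every open
set `U` containing `p`. -/
def IsLimitOf {X : Type*} [TopologicalSpace X] (S : Set X) (p : X) : Prop :=
  p ∈ S ∧ ∀ U : Set X, IsOpen U → p ∈ U → (S \ U).Finite

/-- `S` is a nontrivial convergent sequence in `X`: a countably infinite set having
a limit point belonging to it. -/
def IsNontrivialConvergentSeq {X : Type*} [TopologicalSpace X] (S : Set X) : Prop :=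
  S.Countable ∧ S.Infinite ∧ ∃ p, IsLimitOf S p

/-- The hyperspace `S_c(X)` of nontrivial convergent sequences in `X`, as a subset
of `CL X` (with the subspace Vietoris topology). -/
def Sc (X : Type*) [TopologicalSpace X] : Set (CL X) :=
  {A | IsNontrivialConvergentSeq A.carrier}

open OnePoint

section aux

lemma myIsClosed_of_infty_mem {s : Set (OnePoint ℕ)} (h : ∞ ∈ s) : IsClosed s :=
  (OnePoint.isClosed_iff_of_mem h).mpr (isClosed_discrete _)

lemma myFinite_compl_of_isOpen {s : Set (OnePoint ℕ)} (h : ∞ ∈ s) (ho : IsOpen s) :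
    (((↑) ⁻¹' s : Set ℕ))ᶜ.Finite := by
  have := (OnePoint.isOpen_iff_of_mem h).mp ho
  exact this.2.finite_of_discrete

lemma myIsOpen_coe_singleton (n : ℕ) : IsOpen ({(n : OnePoint ℕ)} : Set (OnePoint ℕ)) := by
  rw [OnePoint.isOpen_iff_of_notMem (by simp [OnePoint.infty_ne_coe])]
  exact isOpen_discrete _

lemma myIsOpen_coe_singleton_compl (n : ℕ) :
    IsOpen (({(n : OnePoint ℕ)} : Set (OnePoint ℕ))ᶜ) := by
  rw [OnePoint.isOpen_iff_of_mem (by simp [OnePoint.infty_ne_coe])]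
  have : ((((↑) : ℕ → OnePoint ℕ) ⁻¹' ({(n : OnePoint ℕ)}ᶜ))ᶜ : Set ℕ) = {n} := by
    ext i; simp
  rw [this]
  exact ⟨isClosed_discrete _, (Set.finite_singleton n).isCompact⟩

end aux



noncomputable section main
attribute [local instance] Classical.propDecidable

lemma CL.ext {X : Type*} [TopologicalSpace X] {A B : CL X} (h : A.carrier = B.carrier) :
    A = B := by cases A; cases B; simpa using h

def myCarrier (a : ℕ → Bool) : Set (OnePoint ℕ) :=
  insert (∞ : OnePoint ℕ) ((fun i : ℕ => (i : OnePoint ℕ)) '' {i : ℕ | a i = true})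

lemma coe_mem_myCarrier {a : ℕ → Bool} {i : ℕ} :
    (i : OnePoint ℕ) ∈ myCarrier a ↔ a i = true := by
  simp [myCarrier, OnePoint.coe_eq_coe, (OnePoint.infty_ne_coe i)]

lemma infty_mem_myCarrier (a : ℕ → Bool) : (∞ : OnePoint ℕ) ∈ myCarrier a :=
  Set.mem_insert _ _

def myCL (a : ℕ → Bool) : CL (OnePoint ℕ) :=
  ⟨myCarrier a, myIsClosed_of_infty_mem (infty_mem_myCarrier a), ⟨∞, infty_mem_myCarrier a⟩⟩

lemma myCL_mem_Sc {a : ℕ → Bool} (ha : {i : ℕ | a i = true}.Infinite) :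
    myCL a ∈ Sc (OnePoint ℕ) := by
  refine ⟨((Set.to_countable _).image _).insert _,
    (ha.image OnePoint.coe_injective.injOn).mono (Set.subset_insert _ _),
    ∞, infty_mem_myCarrier a, ?_⟩
  intro U hU hiU
  have hF := myFinite_compl_of_isOpen hiU hU
  apply (hF.image (fun i : ℕ => (i : OnePoint ℕ))).subset
  rintro x ⟨hx, hxU⟩
  rcases hx with rfl | ⟨i, _, rfl⟩
  · exact absurd hiU hxU
  · exact ⟨i, hxU, rfl⟩

lemma infty_mem_of_mem_Sc {A : CL (OnePoint ℕ)} (hA : A ∈ Sc (OnePoint ℕ)) :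
    (∞ : OnePoint ℕ) ∈ A.carrier := by
  obtain ⟨-, hinf, p, hp, hlim⟩ := hA
  by_cases hpi : p = ∞
  · exact hpi ▸ hp
  obtain ⟨n, rfl⟩ := OnePoint.ne_infty_iff_exists.mp hpi
  exfalso
  have hfin := hlim {(n : OnePoint ℕ)} (myIsOpen_coe_singleton n) rfl
  refine hinf ((hfin.union (Set.finite_singleton ((n : OnePoint ℕ)))).subset ?_)
  intro x hx
  by_cases h : x = (n : OnePoint ℕ)
  · exact Or.inr (by simp [h])
  · exact Or.inl ⟨hx, h⟩

lemma carrier_eq_of_mem_Sc {A : CL (OnePoint ℕ)} (hA : A ∈ Sc (OnePoint ℕ)) :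
    A.carrier = myCarrier (fun i => decide ((i : OnePoint ℕ) ∈ A.carrier)) := by
  ext x
  constructor
  · intro hx
    by_cases hxi : x = ∞
    · exact hxi ▸ infty_mem_myCarrier _
    obtain ⟨n, rfl⟩ := OnePoint.ne_infty_iff_exists.mp hxi
    exact coe_mem_myCarrier.mpr (by simpa using hx)
  · rintro (rfl | ⟨i, hi, rfl⟩)
    · exact infty_mem_of_mem_Sc hA
    · simpa using hi

lemma infinite_setOf_mem_of_mem_Sc {A : CL (OnePoint ℕ)} (hA : A ∈ Sc (OnePoint ℕ)) :
    {i : ℕ | decide ((i : OnePoint ℕ) ∈ A.carrier) = true}.Infinite := by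
  by_contra hfin
  rw [Set.not_infinite] at hfin
  exact hA.2.1 (by rw [carrier_eq_of_mem_Sc hA]; exact ((hfin.image _).insert _))

end main

noncomputable section main2
attribute [local instance] Classical.propDecidable

abbrev Dset : Set (ℕ → Bool) := {a : ℕ → Bool | {i : ℕ | a i = true}.Infinite}

def fwd (a : Dset) : (Sc (OnePoint ℕ) : Set (CL (OnePoint ℕ))) :=
  ⟨myCL a.1, myCL_mem_Sc a.2⟩

def bwd (A : (Sc (OnePoint ℕ) : Set (CL (OnePoint ℕ)))) : Dset :=
  ⟨fun i => decide ((i : OnePoint ℕ) ∈ A.1.carrier), infinite_setOf_mem_of_mem_Sc A.2⟩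

lemma isOpen_eval_set (i : ℕ) (b : Bool) : IsOpen {a : Dset | (a : ℕ → Bool) i = b} := by
  have : Continuous (fun a : Dset => (a : ℕ → Bool) i) :=
    (continuous_apply i).comp continuous_subtype_val
  exact (isOpen_discrete {b}).preimage this

lemma continuous_fwd : Continuous fwd := by
  apply Continuous.subtype_mk
  rw [continuous_generateFrom_iff]
  rintro s ⟨𝒰, h𝒰, rfl⟩
  set V : Set (OnePoint ℕ) := ⋃₀ (𝒰 : Set (Set (OnePoint ℕ))) with hVdef
  have hVo : IsOpen V := isOpen_sUnion (by simpa using h𝒰)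
  have hsplit : (fun a : Dset => myCL a.1) ⁻¹' CL.box 𝒰 =
      {a : Dset | myCarrier a.1 ⊆ V} ∩
      ⋂ U ∈ 𝒰, {a : Dset | (myCarrier a.1 ∩ U).Nonempty} := by
    ext a
    simp only [CL.box, myCL, Set.mem_preimage, Set.mem_setOf_eq, Set.mem_inter_iff,
      Set.mem_iInter, hVdef]
  rw [hsplit]
  refine IsOpen.inter ?_ (isOpen_biInter_finset fun U hU => ?_)
  · by_cases hVi : (∞ : OnePoint ℕ) ∈ V
    · have hF := myFinite_compl_of_isOpen hVi hVo
      have heq : {a : Dset | myCarrier a.1 ⊆ V} =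
          ⋂ i ∈ (((↑) : ℕ → OnePoint ℕ) ⁻¹' V)ᶜ, {a : Dset | (a : ℕ → Bool) i = false} := by
        ext a
        simp only [Set.mem_setOf_eq, Set.mem_iInter]
        constructor
        · intro hsub i hi
          cases h : (a : ℕ → Bool) i with
          | false => rfl
          | true => exact absurd (hsub (coe_mem_myCarrier.mpr h)) hi
        · rintro h x (rfl | ⟨i, hi, rfl⟩)
          · exact hVi
          · by_contra hxV
            have := h i hxV
            simp only [Set.mem_setOf_eq] at hi
            rw [hi] at this
            exact Bool.noConfusion this
      rw [heq]
      exact hF.isOpen_biInter fun i _ => isOpen_eval_set i false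
    · have heq : {a : Dset | myCarrier a.1 ⊆ V} = (∅ : Set Dset) := by
        ext a
        simp only [Set.mem_setOf_eq, Set.mem_empty_iff_false, iff_false]
        exact fun hsub => hVi (hsub (infty_mem_myCarrier _))
      rw [heq]; exact isOpen_empty
  · by_cases hUi : (∞ : OnePoint ℕ) ∈ U
    · have heq : {a : Dset | (myCarrier a.1 ∩ U).Nonempty} = (Set.univ : Set Dset) := by
        ext a
        simp only [Set.mem_setOf_eq, Set.mem_univ, iff_true]
        exact ⟨∞, infty_mem_myCarrier _, hUi⟩
      rw [heq]; exact isOpen_univ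
    · have heq : {a : Dset | (myCarrier a.1 ∩ U).Nonempty} =
          ⋃ i ∈ (((↑) : ℕ → OnePoint ℕ) ⁻¹' U), {a : Dset | (a : ℕ → Bool) i = true} := by
        ext a
        simp only [Set.mem_setOf_eq, Set.mem_iUnion]
        constructor
        · rintro ⟨x, hx, hxU⟩
          rcases hx with rfl | ⟨i, hi, rfl⟩
          · exact absurd hxU hUi
          · exact ⟨i, hxU, hi⟩
        · rintro ⟨i, hiU, hai⟩
          exact ⟨(i : OnePoint ℕ), coe_mem_myCarrier.mpr hai, hiU⟩
      rw [heq]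
      exact isOpen_biUnion fun i _ => isOpen_eval_set i true

lemma isOpen_box {𝒰 : Finset (Set (OnePoint ℕ))} (h : ∀ U ∈ 𝒰, IsOpen U) :
    IsOpen (CL.box 𝒰) :=
  TopologicalSpace.isOpen_generateFrom_of_mem ⟨𝒰, h, rfl⟩

lemma mem_box_pair (n : ℕ) (A : CL (OnePoint ℕ)) :
    A ∈ CL.box ({Set.univ, {(n : OnePoint ℕ)}} : Finset (Set (OnePoint ℕ))) ↔
      (n : OnePoint ℕ) ∈ A.carrier := by
  simp only [CL.box, Set.mem_setOf_eq, Finset.coe_insert, Finset.coe_singleton,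
    Set.sUnion_insert, Set.sUnion_singleton, Set.univ_union, Finset.mem_insert,
    Finset.mem_singleton]
  constructor
  · rintro ⟨-, h⟩
    obtain ⟨x, hxA, hxn⟩ := h {(n : OnePoint ℕ)} (Or.inr rfl)
    rwa [Set.mem_singleton_iff.mp hxn] at hxA
  · intro hn
    refine ⟨Set.subset_univ _, ?_⟩
    rintro U (rfl | rfl)
    · exact ⟨_, A.nonempty'.choose_spec, trivial⟩
    · exact ⟨(n : OnePoint ℕ), hn, rfl⟩

lemma mem_box_compl (n : ℕ) (A : CL (OnePoint ℕ)) :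
    A ∈ CL.box ({({(n : OnePoint ℕ)}ᶜ)} : Finset (Set (OnePoint ℕ))) ↔
      (n : OnePoint ℕ) ∉ A.carrier := by
  simp only [CL.box, Set.mem_setOf_eq, Finset.coe_singleton, Set.sUnion_singleton,
    Finset.mem_singleton]
  constructor
  · rintro ⟨hsub, -⟩ hn
    exact (hsub hn) rfl
  · intro hn
    refine ⟨fun x hx hxn => hn (Set.mem_singleton_iff.mp hxn ▸ hx), ?_⟩
    rintro U rfl
    obtain ⟨x, hx⟩ := A.nonempty'
    exact ⟨x, hx, fun hxn => hn (Set.mem_singleton_iff.mp hxn ▸ hx)⟩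

lemma continuous_bwd : Continuous bwd := by
  apply Continuous.subtype_mk
  apply continuous_pi
  intro n
  apply IsLocallyConstant.continuous
  rw [IsLocallyConstant.iff_isOpen_fiber]
  intro b
  cases b with
  | true =>
    have heq : (fun A : (Sc (OnePoint ℕ) : Set (CL (OnePoint ℕ))) =>
        decide ((n : OnePoint ℕ) ∈ A.1.carrier)) ⁻¹' {true} =
        Subtype.val ⁻¹' CL.box ({Set.univ, {(n : OnePoint ℕ)}} : Finset (Set (OnePoint ℕ))) := by
      ext A
      simp [mem_box_pair]
    rw [heq]
    exact (isOpen_box (by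
      rintro U hU
      rcases Finset.mem_insert.mp hU with rfl | hU
      · exact isOpen_univ
      · rw [Finset.mem_singleton.mp hU]; exact myIsOpen_coe_singleton n)).preimage
      continuous_subtype_val
  | false =>
    have heq : (fun A : (Sc (OnePoint ℕ) : Set (CL (OnePoint ℕ))) =>
        decide ((n : OnePoint ℕ) ∈ A.1.carrier)) ⁻¹' {false} =
        Subtype.val ⁻¹' CL.box ({({(n : OnePoint ℕ)}ᶜ)} : Finset (Set (OnePoint ℕ))) := by
      ext A
      simp [mem_box_compl]
    rw [heq]
    exact (isOpen_box (by
      rintro U hU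
      rw [Finset.mem_singleton.mp hU]
      exact myIsOpen_coe_singleton_compl n)).preimage continuous_subtype_val

def myHomeo : Dset ≃ₜ (Sc (OnePoint ℕ) : Set (CL (OnePoint ℕ))) where
  toFun := fwd
  invFun := bwd
  left_inv := by
    intro a
    apply Subtype.ext
    funext i
    show decide ((i : OnePoint ℕ) ∈ myCarrier a.1) = a.1 i
    cases h : (a : ℕ → Bool) i <;> simp [coe_mem_myCarrier, h]
  right_inv := by
    intro A
    apply Subtype.ext
    apply CL.ext
    exact (carrier_eq_of_mem_Sc A.2).symm
  continuous_toFun := continuous_fwd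
  continuous_invFun := continuous_bwd

end main2

open OnePoint in
/-- Let `𝒞_ω ⊆ {0,1}^ω` be the set of binary sequences with infinitely many ones,
with the subspace (product) topology.  The map `φ`, sending `a` to
`{i : a i = 1} ∪ {∞}` as an element of `S_c(ω+1)` (where `ω+1` is the one-point
compactification of the discrete space `ω`), is a homeomorphism. -/
theorem stmt_18 :
    ∃ φ : ({a : ℕ → Bool | {i : ℕ | a i = true}.Infinite} : Set (ℕ → Bool)) ≃ₜ
        ((Sc (OnePoint ℕ) : Set (CL (OnePoint ℕ)))),
      ∀ a, ((φ a : CL (OnePoint ℕ))).carrier =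
        insert (∞ : OnePoint ℕ)
          ((fun i : ℕ => (i : OnePoint ℕ)) '' {i : ℕ | (a : ℕ → Bool) i = true}) :=
  ⟨myHomeo, fun _ => rfl⟩
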